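/- Let π : X → Y be a factor map of G systems X = (X, T, μ_X) and Y = (Y, S, μ_Y). In the Hilbert space L²(X, μ_X), let P_{KX} denote the orthogonal projection onto the closed linear span of the almost periodic functions of X, let P_Y denote the orthogonal projection onto the closed subspace {g ∘ π : g ∈ L²(Y, μ_Y)}, and let P_{KY} denote the orthogonal projection onto the closed linear span of {g ∘ π : g ∈ L²(Y, μ_Y) almost periodic for Y}. Then ⟨P_{KX} f, P_Y h⟩ = ⟨P_{KY} f, P_{KY} h⟩ for all f, h ∈ L²(X, μ_X). (This expresses that the relatively independent joining of the Kronecker factor of X with Y over the Kronecker factor of Y is a factor of X.) -/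

import Mathlib

open MeasureTheory Filter Topology

section Defs

variable {G : Type*} [Group G] {X Y : Type*} [MeasurableSpace X] [MeasurableSpace Y]

/-- A joining of two `G` systems: a probability measure on the product which is invariant
under the diagonal action and has the two given measures as marginals. -/
def IsJoining (T : G → X → X) (S : G → Y → Y) (μX : Measure X) (μY : Measure Y)
    (ν : Measure (X × Y)) : Prop :=
  IsProbabilityMeasure ν ∧
    (∀ g : G, MeasurePreserving (fun p : X × Y => (T g p.1, S g p.2)) ν ν) ∧
    ν.map Prod.fst = μX ∧ ν.map Prod.snd = μY

/-- `f ∈ L²(X, μ)` is almost periodic if the orbit `{f ∘ T^g : g ∈ G}` has compact closure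
in the norm topology of `L²(X, μ)`. -/
def AlmostPeriodic (T : G → X → X) (μ : Measure X) (f : Lp ℂ 2 μ) : Prop :=
  IsCompact (closure {h : Lp ℂ 2 μ | ∃ g : G, (h : X → ℂ) =ᵐ[μ] fun x => f (T g x)})

/-- The joining `ν` projects to the product measure on the product of the Kronecker factors:
almost periodic functions of the two systems are uncorrelated under `ν`. -/
def ProjectsToKroneckerProduct (T : G → X → X) (S : G → Y → Y) (μX : Measure X)
    (μY : Measure Y) (ν : Measure (X × Y)) : Prop :=
  ∀ (f : Lp ℂ 2 μX) (h : Lp ℂ 2 μY), AlmostPeriodic T μX f → AlmostPeriodic S μY h →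
    ∫ p, f p.1 * h p.2 ∂ν = (∫ x, f x ∂μX) * (∫ y, h y ∂μY)

/-- Two `G` systems are quasi-disjoint if the only joining projecting to the product measure
on the product of the Kronecker factors is the product measure. -/
def QuasiDisjoint (T : G → X → X) (S : G → Y → Y) (μX : Measure X) (μY : Measure Y) : Prop :=
  ∀ ν : Measure (X × Y), IsJoining T S μX μY ν →
    ProjectsToKroneckerProduct T S μX μY ν → ν = μX.prod μY

/-- Two `G` systems are disjoint if the product measure is their only joining. -/
def DisjointSystems (T : G → X → X) (S : G → Y → Y) (μX : Measure X) (μY : Measure Y) : Prop :=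
  ∀ ν : Measure (X × Y), IsJoining T S μX μY ν → ν = μX.prod μY

/-- Two `G` systems are Kronecker disjoint if every joining projects to the product measure
on the product of the Kronecker factors. -/
def KroneckerDisjoint (T : G → X → X) (S : G → Y → Y) (μX : Measure X) (μY : Measure Y) :
    Prop :=
  ∀ ν : Measure (X × Y), IsJoining T S μX μY ν → ProjectsToKroneckerProduct T S μX μY ν

/-- A separating sieve for the system `(X, T, μ)`. -/
def HasSeparatingSieve (T : G → X → X) (μ : Measure X) : Prop :=
  ∃ A : ℕ → Set X, (∀ n, MeasurableSet (A n)) ∧ (∀ n, 0 < μ (A n)) ∧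
    Tendsto (fun n => μ (A n)) atTop (𝓝 0) ∧
    ∃ X' : Set X, μ X'ᶜ = 0 ∧
      ∀ x ∈ X', ∀ x' ∈ X', (∀ n : ℕ, ∃ g : G, T g x ∈ A n ∧ T g x' ∈ A n) → x = x'

/-- A factor map of `G` systems: a measurable, almost everywhere `G`-equivariant map
pushing `μX` forward to `μY`. -/
def IsFactorMap (T : G → X → X) (S : G → Y → Y) (μX : Measure X) (μY : Measure Y)
    (π : X → Y) : Prop :=
  Measurable π ∧ μX.map π = μY ∧ ∀ g : G, ∀ᵐ x ∂μX, π (T g x) = S g (π x)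

/-- Ergodicity of a `G` system: every invariant Borel set is null or conull. -/
def ErgodicSystem (T : G → X → X) (μ : Measure X) : Prop :=
  ∀ A : Set X, MeasurableSet A → (∀ g : G, T g ⁻¹' A = A) → μ A = 0 ∨ μ A = 1

end Defs

/-- `p` is the orthogonal projection of `f` onto the (closed) subspace given by the set `K`. -/
def IsOrthogonalProjectionOnto {E : Type*} [NormedAddCommGroup E] [InnerProductSpace ℂ E]
    (K : Set E) (f p : E) : Prop :=
  p ∈ K ∧ ∀ v ∈ K, (inner ℂ (f - p) v : ℂ) = 0

/-- Uniqueness of the orthogonal projection onto a submodule. -/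
private lemma proj_unique {E : Type*} [NormedAddCommGroup E] [InnerProductSpace ℂ E]
    (K : Submodule ℂ E) {x p₁ p₂ : E} (h₁ : p₁ ∈ K) (h₂ : p₂ ∈ K)
    (o₁ : ∀ v ∈ K, (inner ℂ (x - p₁) v : ℂ) = 0)
    (o₂ : ∀ v ∈ K, (inner ℂ (x - p₂) v : ℂ) = 0) : p₁ = p₂ := by
  have hm : p₁ - p₂ ∈ K := K.sub_mem h₁ h₂
  have h0 : (inner ℂ ((x - p₂) - (x - p₁)) (p₁ - p₂) : ℂ) = 0 := by
    rw [inner_sub_left, o₁ _ hm, o₂ _ hm, sub_zero]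
  have hx : (x - p₂) - (x - p₁) = p₁ - p₂ := by abel
  rw [hx] at h0
  exact sub_eq_zero.mp (inner_self_eq_zero.mp h0)

/-- Let `π : X → Y` be a factor map of `G` systems.  With `P_KX` the
orthogonal projection of `L²(X)` onto the closed span of the almost periodic functions of `X`,
`P_Y` the projection onto the image of `L²(Y)`, and `P_KY` the projection onto the closed span
of the pullbacks of the almost periodic functions of `Y`, one has
`⟨P_KX f, P_Y h⟩ = ⟨P_KY f, P_KY h⟩` for all `f, h ∈ L²(X)`. -/
theorem relatively_independent_joining_is_factor
    {G : Type*} [Group G] [Countable G]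
    {X : Type*} [MetricSpace X] [CompactSpace X] [MeasurableSpace X] [BorelSpace X]
    {Y : Type*} [MetricSpace Y] [CompactSpace Y] [MeasurableSpace Y] [BorelSpace Y]
    (T : G → X → X) (hT1 : ∀ x, T 1 x = x)
    (hTmul : ∀ g h x, T (g * h) x = T g (T h x))
    (hTcont : ∀ g, Continuous (T g))
    (μX : Measure X) (hXprob : IsProbabilityMeasure μX)
    (hTμ : ∀ g, MeasurePreserving (T g) μX μX)
    (S : G → Y → Y) (hS1 : ∀ y, S 1 y = y)
    (hSmul : ∀ g h y, S (g * h) y = S g (S h y))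
    (hScont : ∀ g, Continuous (S g))
    (μY : Measure Y) (hYprob : IsProbabilityMeasure μY)
    (hSμ : ∀ g, MeasurePreserving (S g) μY μY)
    (π : X → Y) (hπ : IsFactorMap T S μX μY π) :
    ∀ f h pKXf pYh pKYf pKYh : Lp ℂ 2 μX,
      IsOrthogonalProjectionOnto
        (closure ((Submodule.span ℂ {u : Lp ℂ 2 μX | AlmostPeriodic T μX u} :
          Submodule ℂ (Lp ℂ 2 μX)) : Set (Lp ℂ 2 μX))) f pKXf →
      IsOrthogonalProjectionOnto
        {u : Lp ℂ 2 μX | ∃ v : Lp ℂ 2 μY, (u : X → ℂ) =ᵐ[μX] fun x => v (π x)} h pYh →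
      IsOrthogonalProjectionOnto
        (closure ((Submodule.span ℂ {u : Lp ℂ 2 μX | ∃ v : Lp ℂ 2 μY,
          AlmostPeriodic S μY v ∧ (u : X → ℂ) =ᵐ[μX] fun x => v (π x)} :
          Submodule ℂ (Lp ℂ 2 μX)) : Set (Lp ℂ 2 μX))) f pKYf →
      IsOrthogonalProjectionOnto
        (closure ((Submodule.span ℂ {u : Lp ℂ 2 μX | ∃ v : Lp ℂ 2 μY,
          AlmostPeriodic S μY v ∧ (u : X → ℂ) =ᵐ[μX] fun x => v (π x)} :
          Submodule ℂ (Lp ℂ 2 μX)) : Set (Lp ℂ 2 μX))) h pKYh →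
      (inner ℂ pKXf pYh : ℂ) = inner ℂ pKYf pKYh := by
  classical
  obtain ⟨hπm, hπmap, hπeq⟩ := hπ
  have hπmp : MeasurePreserving π μX μY := ⟨hπm, hπmap⟩
  intro f h pKXf pYh pKYf pKYh hf hh hf' hh'
  obtain ⟨hf1, hf2⟩ := hf
  obtain ⟨hh1, hh2⟩ := hh
  obtain ⟨hf1', hf2'⟩ := hf'
  obtain ⟨hh1', hh2'⟩ := hh'
  -- the pullback isometry and the Koopman operators
  set Pb : Lp ℂ 2 μY →ₗᵢ[ℂ] Lp ℂ 2 μX := Lp.compMeasurePreservingₗᵢ ℂ π hπmp with hPbdef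
  set U : G → (Lp ℂ 2 μX →ₗᵢ[ℂ] Lp ℂ 2 μX) :=
    fun g => Lp.compMeasurePreservingₗᵢ ℂ (T g) (hTμ g) with hUdef
  set W : G → (Lp ℂ 2 μY →ₗᵢ[ℂ] Lp ℂ 2 μY) :=
    fun g => Lp.compMeasurePreservingₗᵢ ℂ (S g) (hSμ g) with hWdef
  have hPb : ∀ v : Lp ℂ 2 μY, ⇑(Pb v) =ᵐ[μX] ⇑v ∘ π :=
    fun v => Lp.coeFn_compMeasurePreserving v hπmp
  have hU : ∀ (g : G) (u : Lp ℂ 2 μX), ⇑(U g u) =ᵐ[μX] ⇑u ∘ (T g) :=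
    fun g u => Lp.coeFn_compMeasurePreserving u (hTμ g)
  have hW : ∀ (g : G) (v : Lp ℂ 2 μY), ⇑(W g v) =ᵐ[μY] ⇑v ∘ (S g) :=
    fun g v => Lp.coeFn_compMeasurePreserving v (hSμ g)
  -- composition of a.e. equalities
  have hcX : ∀ (g : G) {φ ψ : X → ℂ}, φ =ᵐ[μX] ψ → φ ∘ (T g) =ᵐ[μX] ψ ∘ (T g) := by
    intro g φ ψ hφψ
    exact ae_eq_comp (hTμ g).measurable.aemeasurable (by rwa [(hTμ g).map_eq])
  have hcπ : ∀ {φ ψ : Y → ℂ}, φ =ᵐ[μY] ψ → φ ∘ π =ᵐ[μX] ψ ∘ π := by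
    intro φ ψ hφψ
    exact ae_eq_comp hπm.aemeasurable (by rwa [hπmap])
  -- orbits
  have horbX : ∀ u : Lp ℂ 2 μX,
      {h' : Lp ℂ 2 μX | ∃ g : G, (h' : X → ℂ) =ᵐ[μX] fun x => u (T g x)}
        = Set.range (fun g : G => U g u) := by
    intro u
    ext h'
    simp only [Set.mem_setOf_eq, Set.mem_range]
    constructor
    · rintro ⟨g, hg⟩
      exact ⟨g, (Lp.ext (hg.trans (hU g u).symm)).symm⟩
    · rintro ⟨g, rfl⟩
      exact ⟨g, hU g u⟩
  have horbY : ∀ v : Lp ℂ 2 μY,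
      {h' : Lp ℂ 2 μY | ∃ g : G, (h' : Y → ℂ) =ᵐ[μY] fun y => v (S g y)}
        = Set.range (fun g : G => W g v) := by
    intro v
    ext h'
    simp only [Set.mem_setOf_eq, Set.mem_range]
    constructor
    · rintro ⟨g, hg⟩
      exact ⟨g, (Lp.ext (hg.trans (hW g v).symm)).symm⟩
    · rintro ⟨g, rfl⟩
      exact ⟨g, hW g v⟩
  have hAPX : ∀ u : Lp ℂ 2 μX, AlmostPeriodic T μX u ↔
      IsCompact (closure (Set.range fun g : G => U g u)) := by
    intro u
    unfold AlmostPeriodic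
    rw [horbX]
  have hAPY : ∀ v : Lp ℂ 2 μY, AlmostPeriodic S μY v ↔
      IsCompact (closure (Set.range fun g : G => W g v)) := by
    intro v
    unfold AlmostPeriodic
    rw [horbY]
  -- group identities
  have hUinv : ∀ (g : G) (u : Lp ℂ 2 μX), U g (U g⁻¹ u) = u := by
    intro g u
    refine Lp.ext ?_
    refine (hU g (U g⁻¹ u)).trans ((hcX g (hU g⁻¹ u)).trans ?_)
    have : (⇑u ∘ T g⁻¹) ∘ T g = ⇑u := by
      funext x
      simp only [Function.comp_apply]
      rw [← hTmul, inv_mul_cancel, hT1]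
    rw [this]
  have hUPb : ∀ (g : G) (v : Lp ℂ 2 μY), U g (Pb v) = Pb (W g v) := by
    intro g v
    refine Lp.ext ?_
    have h3 : (⇑v ∘ π) ∘ (T g) =ᵐ[μX] (⇑v ∘ (S g)) ∘ π := by
      filter_upwards [hπeq g] with x hx
      simp only [Function.comp_apply, hx]
    exact (hU g (Pb v)).trans ((hcX g (hPb v)).trans (h3.trans
      (((hcπ (hW g v)).symm).trans (hPb (W g v)).symm)))
  -- the closed subspace V = π^* L²(Y)
  set V : Submodule ℂ (Lp ℂ 2 μX) := LinearMap.range Pb.toLinearMap with hVdef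
  have hVmem : ∀ u : Lp ℂ 2 μX, u ∈ V ↔ ∃ v, Pb v = u := fun u => LinearMap.mem_range
  have hVclosed : IsClosed (V : Set (Lp ℂ 2 μX)) := by
    have hr : Set.range ⇑Pb = (V : Set (Lp ℂ 2 μX)) := by
      ext u
      simp only [Set.mem_range, SetLike.mem_coe, hVmem]
    rw [← hr]
    exact (Pb.isometry.isClosedEmbedding).isClosed_range
  have hVcomplete : CompleteSpace V := hVclosed.completeSpace_coe
  have hYset : {u : Lp ℂ 2 μX | ∃ v : Lp ℂ 2 μY, (u : X → ℂ) =ᵐ[μX] fun x => v (π x)}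
      = (V : Set (Lp ℂ 2 μX)) := by
    ext u
    simp only [Set.mem_setOf_eq, SetLike.mem_coe, hVmem]
    constructor
    · rintro ⟨v, hv⟩
      exact ⟨v, Lp.ext ((hPb v).trans hv.symm)⟩
    · rintro ⟨v, rfl⟩
      exact ⟨v, hPb v⟩
  -- the orthogonal projection onto V
  set Q : Lp ℂ 2 μX →L[ℂ] Lp ℂ 2 μX := V.subtypeL.comp V.orthogonalProjectionOnto with hQdef
  have hQmemV : ∀ u : Lp ℂ 2 μX, Q u ∈ V := fun u => (V.orthogonalProjectionOnto u).2
  have hQorth : ∀ u : Lp ℂ 2 μX, ∀ w ∈ V, (inner ℂ (u - Q u) w : ℂ) = 0 :=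
    fun u => Submodule.starProjection_inner_eq_zero u
  have hVinv : ∀ (g : G), ∀ u ∈ V, U g u ∈ V := by
    intro g u hu
    obtain ⟨v, rfl⟩ := (hVmem u).1 hu
    exact (hVmem _).2 ⟨W g v, (hUPb g v).symm⟩
  have hQU : ∀ (g : G) (u : Lp ℂ 2 μX), Q (U g u) = U g (Q u) := by
    intro g u
    refine proj_unique V (hQmemV (U g u)) (hVinv g _ (hQmemV u)) (hQorth (U g u)) ?_
    intro w hw
    have hw' : U g⁻¹ w ∈ V := hVinv g⁻¹ w hw
    calc (inner ℂ (U g u - U g (Q u)) w : ℂ)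
        = inner ℂ ((U g) (u - Q u)) ((U g) (U g⁻¹ w)) := by rw [map_sub, hUinv g w]
      _ = inner ℂ (u - Q u) (U g⁻¹ w) := (U g).inner_map_map _ _
      _ = 0 := hQorth u _ hw'
  -- AP transfer along the pullback
  have hfwd : ∀ v : Lp ℂ 2 μY, AlmostPeriodic S μY v → AlmostPeriodic T μX (Pb v) := by
    intro v hv
    rw [hAPY] at hv
    rw [hAPX]
    have hK : IsCompact (⇑Pb '' closure (Set.range fun g : G => W g v)) :=
      hv.image Pb.continuous
    have hsub : Set.range (fun g : G => U g (Pb v))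
        ⊆ ⇑Pb '' closure (Set.range fun g : G => W g v) := by
      rintro _ ⟨g, rfl⟩
      exact ⟨W g v, subset_closure ⟨g, rfl⟩, (hUPb g v).symm⟩
    exact hK.of_isClosed_subset isClosed_closure (closure_minimal hsub hK.isClosed)
  have hbwd : ∀ v : Lp ℂ 2 μY, AlmostPeriodic T μX (Pb v) → AlmostPeriodic S μY v := by
    intro v hv
    rw [hAPX] at hv
    rw [hAPY]
    have hpre : IsCompact (⇑Pb ⁻¹' closure (Set.range fun g : G => U g (Pb v))) :=
      (Pb.isometry.isClosedEmbedding).isCompact_preimage hv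
    have hsub : Set.range (fun g : G => W g v)
        ⊆ ⇑Pb ⁻¹' closure (Set.range fun g : G => U g (Pb v)) := by
      rintro _ ⟨g, rfl⟩
      exact subset_closure ⟨g, hUPb g v⟩
    exact hpre.of_isClosed_subset isClosed_closure (closure_minimal hsub
      (isClosed_closure.preimage Pb.continuous))
  -- Q preserves almost periodicity
  have hQAP : ∀ u : Lp ℂ 2 μX, AlmostPeriodic T μX u → AlmostPeriodic T μX (Q u) := by
    intro u hu
    rw [hAPX] at hu ⊢
    have hK : IsCompact (⇑Q '' closure (Set.range fun g : G => U g u)) :=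
      hu.image Q.continuous
    have hsub : Set.range (fun g : G => U g (Q u))
        ⊆ ⇑Q '' closure (Set.range fun g : G => U g u) := by
      rintro _ ⟨g, rfl⟩
      exact ⟨U g u, subset_closure ⟨g, rfl⟩, hQU g u⟩
    exact hK.of_isClosed_subset isClosed_closure (closure_minimal hsub hK.isClosed)
  -- generating sets
  set genX : Set (Lp ℂ 2 μX) := {u : Lp ℂ 2 μX | AlmostPeriodic T μX u} with hgenXdef
  set genY : Set (Lp ℂ 2 μX) := {u : Lp ℂ 2 μX | ∃ v : Lp ℂ 2 μY,
    AlmostPeriodic S μY v ∧ (u : X → ℂ) =ᵐ[μX] fun x => v (π x)} with hgenYdef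
  have hcore : ∀ u ∈ genX, Q u ∈ genY := by
    intro u hu
    obtain ⟨v, hv⟩ := (hVmem _).1 (hQmemV u)
    refine ⟨v, hbwd v (by rw [hv]; exact hQAP u hu), ?_⟩
    rw [← hv]
    exact hPb v
  have hgenYX : genY ⊆ genX := by
    rintro u ⟨v, hv, huv⟩
    have hu : u = Pb v := Lp.ext (huv.trans (hPb v).symm)
    show AlmostPeriodic T μX u
    rw [hu]
    exact hfwd v hv
  have hgenYV : genY ⊆ (V : Set (Lp ℂ 2 μX)) := by
    rintro u ⟨v, hv, huv⟩
    exact (hVmem u).2 ⟨v, Lp.ext ((hPb v).trans huv.symm)⟩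
  -- the Kronecker subspaces
  set KY : Submodule ℂ (Lp ℂ 2 μX) := (Submodule.span ℂ genY).topologicalClosure with hKYdef
  have hSKY : closure ((Submodule.span ℂ genY : Submodule ℂ (Lp ℂ 2 μX)) : Set (Lp ℂ 2 μX))
      = (KY : Set (Lp ℂ 2 μX)) := (Submodule.topologicalClosure_coe _).symm
  have hKYsub : (KY : Set (Lp ℂ 2 μX)) ⊆
      closure ((Submodule.span ℂ genX : Submodule ℂ (Lp ℂ 2 μX)) : Set (Lp ℂ 2 μX)) := by
    rw [← hSKY]
    exact closure_mono (SetLike.coe_subset_coe.mpr (Submodule.span_mono hgenYX))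
  have hKYV : (KY : Set (Lp ℂ 2 μX)) ⊆ (V : Set (Lp ℂ 2 μX)) := by
    rw [← hSKY]
    exact closure_minimal (SetLike.coe_subset_coe.mpr (Submodule.span_le.mpr hgenYV)) hVclosed
  have hQKX : ∀ u ∈ closure ((Submodule.span ℂ genX : Submodule ℂ (Lp ℂ 2 μX))
      : Set (Lp ℂ 2 μX)), Q u ∈ KY := by
    intro u hu
    have hKYclosed : IsClosed (KY : Set (Lp ℂ 2 μX)) := by
      rw [← hSKY]; exact isClosed_closure
    have hclosed : IsClosed (⇑Q ⁻¹' (KY : Set (Lp ℂ 2 μX))) :=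
      hKYclosed.preimage Q.continuous
    have hsp : ((Submodule.span ℂ genX : Submodule ℂ (Lp ℂ 2 μX)) : Set (Lp ℂ 2 μX))
        ⊆ ⇑Q ⁻¹' (KY : Set (Lp ℂ 2 μX)) := by
      have hle : Submodule.span ℂ genX ≤ KY.comap (Q : Lp ℂ 2 μX →ₗ[ℂ] Lp ℂ 2 μX) := by
        rw [Submodule.span_le]
        intro w hw
        exact Submodule.le_topologicalClosure _ (Submodule.subset_span (hcore w hw))
      intro w hw
      exact hle hw
    exact closure_minimal hsp hclosed hu
  -- membership facts from the hypotheses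
  rw [hYset] at hh1 hh2
  rw [hSKY] at hf1' hf2' hh1' hh2'
  -- Q pKXf = pKYf
  have hqKY : Q pKXf ∈ KY := hQKX _ hf1
  have hqorth : ∀ w ∈ KY, (inner ℂ (f - Q pKXf) w : ℂ) = 0 := by
    intro w hw
    have hsplit : f - Q pKXf = (f - pKXf) + (pKXf - Q pKXf) := by abel
    rw [hsplit, inner_add_left, hf2 w (hKYsub hw), hQorth pKXf w (hKYV hw), add_zero]
  have hq_eq : Q pKXf = pKYf :=
    proj_unique KY hqKY hf1' hqorth (fun v hv => hf2' v hv)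
  -- the final computation
  have e1 : (inner ℂ pKXf pYh : ℂ) = inner ℂ pKYf pYh := by
    have h0 : (inner ℂ (pKXf - pKYf) pYh : ℂ) = 0 := by
      rw [← hq_eq]
      exact hQorth pKXf pYh hh1
    rw [inner_sub_left] at h0
    linear_combination h0
  have e2 : (inner ℂ pKYf pYh : ℂ) = inner ℂ pKYf h := by
    have h0 : (inner ℂ (h - pYh) pKYf : ℂ) = 0 := hh2 pKYf (hKYV hf1')
    rw [inner_eq_zero_symm, inner_sub_right] at h0
    linear_combination -h0
  have e3 : (inner ℂ pKYf h : ℂ) = inner ℂ pKYf pKYh := by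
    have h0 : (inner ℂ (h - pKYh) pKYf : ℂ) = 0 := hh2' pKYf hf1'
    rw [inner_eq_zero_symm, inner_sub_right] at h0
    linear_combination h0
  rw [e1, e2, e3]
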